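/- Suppose α = 1 and γ > 1 (β, δ ∈ ℝ arbitrary). Then the set A_1 is finite (indeed |A_1| ≤ |β| + 1), and for every integer i with 2 ≤ i < ∞ the set A_i is finite. -/
import Mathlib


open scoped BigOperators

noncomputable section

/-- The Beatty set `S(τ,η) = {⌊τk+η⌋ : k ∈ ℕ} ∩ ℕ`, viewed as a set of positive integers
(inside `ℤ`).  Here `ℕ` denotes the positive integers, so `k` ranges over `k ≥ 1`. -/
def BeattySet (τ η : ℝ) : Set ℤ :=
  {x : ℤ | 0 < x ∧ ∃ k : ℕ, 0 < k ∧ ⌊τ * (k : ℝ) + η⌋ = x}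

/-- The sets `A_i` (for `1 ≤ i < ∞`) associated to the data `(α,β,γ,δ)` and the map `f`
(which satisfies `f(⌊αk+β⌋) = ⌊γk+δ⌋` for `k ≥ 1`):
`A_1 = ℕ \ (S(α,β) ∪ S(γ,δ))`, and for `i ≥ 2`,
`A_i = {x ∈ S(α,β) \ S(γ,δ) : f^j(x) ∈ S(α,β) ∩ S(γ,δ) for 1 ≤ j ≤ i−2, and
f^{i−1}(x) ∈ S(γ,δ) \ S(α,β)}`. -/
def ASet (α β γ δ : ℝ) (f : ℤ → ℤ) (i : ℕ) : Set ℤ :=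
  if i = 1 then {x : ℤ | 0 < x} \ (BeattySet α β ∪ BeattySet γ δ)
  else (BeattySet α β \ BeattySet γ δ) ∩
    {x : ℤ | (∀ j : ℕ, 1 ≤ j → j ≤ i - 2 → f^[j] x ∈ BeattySet α β ∩ BeattySet γ δ) ∧
      f^[i - 1] x ∈ BeattySet γ δ \ BeattySet α β}

/-- The set `A_∞ = {x ∈ S(α,β) \ S(γ,δ) : f^j(x) ∈ S(α,β) ∩ S(γ,δ) for all j ≥ 1}`. -/
def AInf (α β γ δ : ℝ) (f : ℤ → ℤ) : Set ℤ :=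
  (BeattySet α β \ BeattySet γ δ) ∩
    {x : ℤ | ∀ j : ℕ, 1 ≤ j → f^[j] x ∈ BeattySet α β ∩ BeattySet γ δ}

/-- `A` has (Banach) density `d`: the limit of `|A ∩ [n₁,n₂]| / (n₂ − n₁)` as `n₂ − n₁ → ∞`
over intervals `[n₁,n₂]` of positive integers exists and equals `d`. -/
def HasBanachDensity (A : Set ℤ) (d : ℝ) : Prop :=
  ∀ ε : ℝ, 0 < ε → ∃ N : ℕ, ∀ n₁ n₂ : ℕ, 0 < n₁ → n₁ + N ≤ n₂ →
    |((A ∩ Set.Icc (n₁ : ℤ) (n₂ : ℤ)).ncard : ℝ) / ((n₂ : ℝ) - (n₁ : ℝ)) - d| < ε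

end

/-- Suppose `α = 1` and `γ > 1`.  Then `A_1` is finite, with
`|A_1| ≤ |β| + 1`, and for every integer `2 ≤ i < ∞` the set `A_i` is finite. -/
theorem ASet_finite_of_alpha_eq_one (β γ δ : ℝ) (hγ : 1 < γ) (f : ℤ → ℤ)
    (hf : ∀ k : ℕ, 0 < k → f ⌊(1 : ℝ) * (k : ℝ) + β⌋ = ⌊γ * (k : ℝ) + δ⌋) :
    ((ASet 1 β γ δ f 1).Finite ∧ ((ASet 1 β γ δ f 1).ncard : ℝ) ≤ |β| + 1) ∧
      ∀ i : ℕ, 2 ≤ i → (ASet 1 β γ δ f i).Finite := by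
  set B : ℤ := ⌊β⌋ with hB
  -- characterization of S(1,β)
  have hmemS1 : ∀ x : ℤ, x ∈ BeattySet 1 β ↔ 0 < x ∧ B < x := by
    intro x
    constructor
    · rintro ⟨hx, k, hk, hkx⟩
      refine ⟨hx, ?_⟩
      rw [one_mul] at hkx
      have h1 : ((k : ℝ)) = ((k : ℤ) : ℝ) := by push_cast; ring
      rw [h1, Int.floor_intCast_add] at hkx
      omega
    · rintro ⟨hx, hBx⟩
      refine ⟨hx, (x - B).toNat, by omega, ?_⟩
      rw [one_mul]
      have h1 : (((x - B).toNat : ℕ) : ℝ) = ((x - B : ℤ) : ℝ) := by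
        norm_cast; omega
      rw [h1, Int.floor_intCast_add]
      omega
  -- Part 1 : A_1
  have hA1sub : ASet 1 β γ δ f 1 ⊆ Set.Icc 1 B := by
    intro x hx
    simp only [ASet, if_pos rfl, Set.mem_diff, Set.mem_setOf_eq, Set.mem_union] at hx
    obtain ⟨hx0, hx1⟩ := hx
    have : x ∉ BeattySet 1 β := fun h => hx1 (Or.inl h)
    rw [hmemS1] at this
    have hx0' : 0 < x := hx0
    simp only [Set.mem_Icc]
    omega
  have hA1fin : (ASet 1 β γ δ f 1).Finite := (Set.finite_Icc 1 B).subset hA1sub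
  have hcard : ((ASet 1 β γ δ f 1).ncard : ℝ) ≤ |β| + 1 := by
    have h1 : (ASet 1 β γ δ f 1).ncard ≤ (Set.Icc (1 : ℤ) B).ncard :=
      Set.ncard_le_ncard hA1sub (Set.finite_Icc 1 B)
    have h2 : (Set.Icc (1 : ℤ) B).ncard = B.toNat := by
      rw [← Finset.coe_Icc, Set.ncard_coe_finset, Int.card_Icc]
      congr 1; omega
    have h3 : ((B.toNat : ℤ) : ℝ) ≤ |β| + 1 := by
      rcases le_or_gt B 0 with h | h
      · have : B.toNat = 0 := by omega
        rw [this]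
        simp only [Int.cast_zero, Int.cast_natCast, Nat.cast_zero]
        positivity
      · have hB' : ((B.toNat : ℤ) : ℝ) = (B : ℝ) := by norm_cast; omega
        rw [hB']
        have : (B : ℝ) ≤ β := Int.floor_le β
        have := le_abs_self β
        linarith
    calc ((ASet 1 β γ δ f 1).ncard : ℝ) ≤ (B.toNat : ℝ) := by exact_mod_cast h1.trans h2.le
      _ ≤ |β| + 1 := by exact_mod_cast h3
  refine ⟨⟨hA1fin, hcard⟩, ?_⟩
  -- Part 2 : A_i for i ≥ 2
  intro i hi
  -- the finite "exceptional" set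
  set F : Set ℤ := BeattySet γ δ \ BeattySet 1 β with hFdef
  have hFfin : F.Finite := by
    apply (Set.finite_Icc 1 B).subset
    rintro y ⟨hy1, hy2⟩
    have h0 : 0 < y := hy1.1
    rw [hmemS1] at hy2
    simp only [Set.mem_Icc]
    omega
  -- the "canonical" map g agreeing with f on S(1,β)
  set g : ℤ → ℤ := fun y => ⌊γ * ((y - B : ℤ) : ℝ) + δ⌋ with hgdef
  have hgmono : StrictMono g := by
    intro y y' hyy
    have h1 : ((y - B : ℤ) : ℝ) + 1 ≤ ((y' - B : ℤ) : ℝ) := by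
      have : (y : ℝ) + 1 ≤ (y' : ℝ) := by exact_mod_cast hyy
      push_cast
      linarith
    have h2 : γ * ((y - B : ℤ) : ℝ) + δ + 1 ≤ γ * ((y' - B : ℤ) : ℝ) + δ := by
      nlinarith
    have h3 : ⌊γ * ((y - B : ℤ) : ℝ) + δ⌋ + 1 ≤ ⌊γ * ((y' - B : ℤ) : ℝ) + δ⌋ := by
      calc ⌊γ * ((y - B : ℤ) : ℝ) + δ⌋ + 1 = ⌊γ * ((y - B : ℤ) : ℝ) + δ + 1⌋ := by
            rw [Int.floor_add_one]
        _ ≤ _ := Int.floor_le_floor h2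
    simpa [hgdef] using h3
  have hginj : Function.Injective g := hgmono.injective
  have hfg : ∀ y ∈ BeattySet 1 β, f y = g y := by
    intro y hy
    rw [hmemS1] at hy
    have hk : (0 : ℕ) < (y - B).toNat := by omega
    have hcast : (((y - B).toNat : ℕ) : ℝ) = ((y - B : ℤ) : ℝ) := by norm_cast; omega
    have := hf (y - B).toNat hk
    rw [one_mul, hcast, Int.floor_intCast_add] at this
    have hy' : y - B + ⌊β⌋ = y := by omega
    rw [hy'] at this
    simpa [hgdef] using this
  -- unfold membership in A_i
  have hisub : ASet 1 β γ δ f i ⊆ (g^[i - 1]) ⁻¹' F := by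
    intro x hx
    have hne : i ≠ 1 := by omega
    simp only [ASet, if_neg hne, Set.mem_inter_iff, Set.mem_diff, Set.mem_setOf_eq] at hx
    obtain ⟨⟨hxS1, -⟩, hmid, hlast⟩ := hx
    -- iterates of f and g agree
    have hiter : ∀ j : ℕ, j ≤ i - 1 → f^[j] x = g^[j] x := by
      intro j hj
      induction j with
      | zero => simp
      | succ n ih =>
        have hn : n ≤ i - 1 := by omega
        have hfn : f^[n] x ∈ BeattySet 1 β := by
          rcases Nat.eq_zero_or_pos n with h | h
          · rw [h]; simpa using hxS1
          · exact (hmid n h (by omega)).1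
        rw [Function.iterate_succ_apply', Function.iterate_succ_apply',
          ← ih hn, hfg _ hfn]
    have h1 : f^[i - 1] x = g^[i - 1] x := hiter (i - 1) le_rfl
    simp only [Set.mem_preimage, hFdef]
    rw [← h1]
    exact hlast
  exact (hFfin.preimage ((hginj.iterate (i - 1)).injOn)).subset hisub
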